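/- (Symmetry identity, Theorem 2.2) Let a, b be odd positive integers, h ∈ ℤ, r ≥ 1, n ≥ 0, and x real. Then [2]_{q^b}^r [a]_q^n \sum_{j_1,...,j_r=0}^{a-1} (-1)^{j_1+...+j_r} q^{b \sum_{l=1}^r (h-l+1) j_l} E_{n,q^a}^{(h,r)}\left(bx + \frac{b(j_1+...+j_r)}{a}\right) = [2]_{q^a}^r [b]_q^n \sum_{j_1,...,j_r=0}^{b-1} (-1)^{j_1+...+j_r} q^{a \sum_{l=1}^r (h-l+1) j_l} E_{n,q^b}^{(h,r)}\left(ax + \frac{a(j_1+...+j_r)}{b}\right). -/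

import Mathlib

noncomputable def qnum (q x : ℝ) : ℝ := (1 - q ^ x) / (1 - q)

/-- The q-number of a natural number: `[a]_q = (1-q^a)/(1-q)`. -/
noncomputable def qnat (q : ℝ) (a : ℕ) : ℝ := (1 - q ^ a) / (1 - q)

/-- The (h,q)-extension of higher-order Euler polynomials, by the finite closed formula. -/
noncomputable def qE (q : ℝ) (h : ℤ) (r n : ℕ) (x : ℝ) : ℝ :=
  (1 + q) ^ r / (1 - q) ^ n *
    ∑ l ∈ Finset.range (n + 1), (n.choose l : ℝ) * (-(q ^ x)) ^ l /
      ∏ j ∈ Finset.range r, (1 + q ^ (h - r + l + 1 + j))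

open Finset

lemma zpow_fsum {ι : Type*} (q : ℝ) (hq : q ≠ 0) (s : Finset ι) (f : ι → ℤ) :
    q ^ (∑ i ∈ s, f i) = ∏ i ∈ s, q ^ f i := by
  classical
  induction s using Finset.induction with
  | empty => simp
  | insert _ _ hns ih => rw [Finset.sum_insert hns, Finset.prod_insert hns, zpow_add₀ hq, ih]

lemma qE_arg (q : ℝ) (hq0 : 0 < q) (h : ℤ) (r n a b : ℕ) (ha : 0 < a) (x : ℝ) (J : ℕ) :
    qE (q ^ a) h r n ((b : ℝ) * x + (b : ℝ) * J / a) =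
      (1 + q ^ a) ^ r / (1 - q ^ a) ^ n *
        ∑ l ∈ Finset.range (n + 1),
          ((n.choose l : ℝ) * ((-1 : ℝ) ^ l * (q ^ (((a : ℝ) * (b : ℝ)) * x)) ^ l)) *
              ((q ^ b) ^ J) ^ l /
            ∏ k ∈ Finset.range r, (1 + q ^ ((a : ℤ) * (h - r + l + 1 + k))) := by
  unfold qE
  have hbase : ((q : ℝ) ^ a) ^ ((b : ℝ) * x + (b : ℝ) * J / a)
      = q ^ (((a : ℝ) * (b : ℝ)) * x) * (q ^ b) ^ J := by
    rw [← Real.rpow_natCast q a, ← Real.rpow_mul hq0.le]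
    have ha' : (a : ℝ) ≠ 0 := Nat.cast_ne_zero.mpr ha.ne'
    have harg : (a : ℝ) * ((b : ℝ) * x + (b : ℝ) * J / a)
        = ((a : ℝ) * (b : ℝ)) * x + ((b * J : ℕ) : ℝ) := by
      push_cast; field_simp
    rw [harg, Real.rpow_add hq0, Real.rpow_natCast, pow_mul]
  congr 1
  apply Finset.sum_congr rfl
  intro l _
  congr 1
  · rw [hbase, neg_pow, mul_pow]; ring
  · apply Finset.prod_congr rfl
    intro k _
    congr 1
    rw [← zpow_natCast q a, ← zpow_mul]

lemma jsum (q : ℝ) (hq0 : 0 < q) (r : ℕ) (h : ℤ) (l : ℕ) (a b : ℕ) (haodd : Odd a) :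
    ∑ j : Fin r → Fin a,
      (-1 : ℝ) ^ (∑ i, (j i : ℕ)) * q ^ ((b : ℤ) * ∑ i : Fin r, (h - (i : ℕ)) * (j i : ℤ)) *
        ((q ^ b) ^ (∑ i, (j i : ℕ))) ^ l
    = ∏ k ∈ Finset.range r,
        (1 + q ^ ((a : ℤ) * ((b : ℤ) * (h - k + l)))) / (1 + q ^ ((b : ℤ) * (h - k + l))) := by
  have hqne : q ≠ 0 := hq0.ne'
  have step1 : ∀ j : Fin r → Fin a,
      (-1 : ℝ) ^ (∑ i, (j i : ℕ)) * q ^ ((b : ℤ) * ∑ i : Fin r, (h - (i : ℕ)) * (j i : ℤ)) *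
        ((q ^ b) ^ (∑ i, (j i : ℕ))) ^ l
      = ∏ i : Fin r, (-(q ^ ((b : ℤ) * (h - (i : ℕ) + l)))) ^ ((j i : ℕ)) := by
    intro j
    rw [show (b : ℤ) * ∑ i : Fin r, (h - (i : ℕ)) * (j i : ℤ)
        = ∑ i : Fin r, (b : ℤ) * ((h - (i : ℕ)) * (j i : ℤ)) from Finset.mul_sum _ _ _]
    rw [zpow_fsum q hqne, ← Finset.prod_pow_eq_pow_sum, ← pow_mul, Finset.sum_mul]
    rw [show ((q : ℝ) ^ b) ^ (∑ i : Fin r, (j i : ℕ) * l) = ∏ i : Fin r, (q ^ b) ^ ((j i : ℕ) * l)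
      from (Finset.prod_pow_eq_pow_sum _ _ _).symm]
    rw [← Finset.prod_mul_distrib, ← Finset.prod_mul_distrib]
    apply Finset.prod_congr rfl
    intro i _
    have h1 : ((q : ℝ) ^ b) ^ ((j i : ℕ) * l) = q ^ ((b : ℤ) * (((j i : ℕ) * l : ℕ) : ℤ)) := by
      rw [← zpow_natCast q b, ← zpow_natCast (q ^ (b : ℤ)) ((j i : ℕ) * l), ← zpow_mul]
    have h2 : (-(q ^ ((b : ℤ) * (h - (i : ℕ) + l)))) ^ ((j i : ℕ))
        = (-1 : ℝ) ^ ((j i : ℕ)) * q ^ (((b : ℤ) * (h - (i : ℕ) + l)) * (j i : ℕ)) := by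
      rw [neg_pow, ← zpow_natCast (q ^ ((b : ℤ) * (h - (i : ℕ) + l))), ← zpow_mul]
    rw [h1, h2]
    rw [show (((b : ℤ) * (h - (i : ℕ) + l)) * (j i : ℕ) : ℤ)
        = (b : ℤ) * ((h - (i : ℕ)) * (j i : ℤ)) + (b : ℤ) * ((j i : ℕ) * l : ℕ) by push_cast; ring]
    rw [zpow_add₀ hqne]
    ring
  rw [Finset.sum_congr rfl (fun j _ => step1 j)]
  rw [← Fintype.piFinset_univ,
    ← Finset.prod_univ_sum (fun _ : Fin r => (univ : Finset (Fin a)))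
      (fun i c => (-(q ^ ((b : ℤ) * (h - (i : ℕ) + l)))) ^ ((c : ℕ)))]
  rw [Fin.prod_univ_eq_prod_range
    (fun k => ∑ j : Fin a, (-(q ^ ((b : ℤ) * (h - (k : ℕ) + l)))) ^ ((j : ℕ)))]
  apply Finset.prod_congr rfl
  intro k _
  set m : ℤ := (b : ℤ) * (h - (k : ℕ) + l) with hm
  have hpos : (0 : ℝ) < q ^ m := zpow_pos hq0 m
  have ht1 : (-(q ^ m)) ≠ 1 := by nlinarith
  rw [Fin.sum_univ_eq_sum_range (fun j => (-(q ^ m)) ^ j) a, geom_sum_eq ht1 a]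
  have hta : (-(q ^ m)) ^ a = -(q ^ ((a : ℤ) * m)) := by
    rw [haodd.neg_pow, ← zpow_natCast (q ^ m), ← zpow_mul, mul_comm m (a : ℤ)]
  rw [hta]
  have hd1 : (-(q ^ ((a : ℤ) * m)) - 1) = -(1 + q ^ ((a : ℤ) * m)) := by ring
  have hd2 : (-(q ^ m) - 1) = -(1 + q ^ m) := by ring
  rw [hd1, hd2, neg_div_neg_eq]

lemma swap_helper {ι : Type*} [Fintype ι] (s : Finset ℕ) (C : ℝ) (A : ι → ℝ)
    (B : ι → ℕ → ℝ) (T D : ℕ → ℝ) :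
    (∑ j : ι, A j * (C * ∑ l ∈ s, T l * B j l / D l))
      = C * ∑ l ∈ s, T l / D l * ∑ j : ι, A j * B j l := by
  calc (∑ j : ι, A j * (C * ∑ l ∈ s, T l * B j l / D l))
      = ∑ j : ι, ∑ l ∈ s, C * (T l / D l * (A j * B j l)) :=
        Finset.sum_congr rfl fun j _ => by
          rw [Finset.mul_sum, Finset.mul_sum]
          exact Finset.sum_congr rfl fun l _ => by ring
    _ = ∑ l ∈ s, ∑ j : ι, C * (T l / D l * (A j * B j l)) := Finset.sum_comm
    _ = C * ∑ l ∈ s, T l / D l * ∑ j : ι, A j * B j l := by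
          rw [Finset.mul_sum]
          exact Finset.sum_congr rfl fun l _ => by rw [Finset.mul_sum, Finset.mul_sum]

lemma key (q : ℝ) (hq0 : 0 < q) (hq1 : q < 1) (r : ℕ) (h : ℤ) (n : ℕ) (x : ℝ)
    (a b : ℕ) (ha : 0 < a) (haodd : Odd a) :
    (1 + q ^ b) ^ r * (qnat q a) ^ n *
        ∑ j : Fin r → Fin a,
          (-1 : ℝ) ^ (∑ l, (j l : ℕ)) *
            q ^ ((b : ℤ) * ∑ l : Fin r, (h - (l : ℕ)) * (j l : ℤ)) *
            qE (q ^ a) h r n ((b : ℝ) * x + (b : ℝ) * (∑ l, (j l : ℕ) : ℕ) / a)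
    = (1 + q ^ a) ^ r * (1 + q ^ b) ^ r / (1 - q) ^ n *
        ∑ l ∈ Finset.range (n + 1),
          ((n.choose l : ℝ) * ((-1 : ℝ) ^ l * (q ^ (((a : ℝ) * (b : ℝ)) * x)) ^ l)) *
            ∏ k ∈ Finset.range r,
              (1 + q ^ ((a : ℤ) * ((b : ℤ) * (h - r + l + 1 + k)))) /
                ((1 + q ^ ((b : ℤ) * (h - r + l + 1 + k))) *
                  (1 + q ^ ((a : ℤ) * (h - r + l + 1 + k)))) := by
  have hqne : q ≠ 0 := hq0.ne'
  simp only [qE_arg q hq0 h r n a b ha x]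
  set C : ℝ := (1 + q ^ a) ^ r / (1 - q ^ a) ^ n with hC
  set P : ℝ := q ^ (((a : ℝ) * (b : ℝ)) * x) with hP
  set T : ℕ → ℝ := fun l => (n.choose l : ℝ) * ((-1 : ℝ) ^ l * P ^ l) with hT
  set D : ℕ → ℝ := fun l => ∏ k ∈ Finset.range r, (1 + q ^ ((a : ℤ) * (h - r + l + 1 + k)))
    with hD
  rw [swap_helper (Finset.range (n + 1)) C
    (fun j : Fin r → Fin a =>
      (-1 : ℝ) ^ (∑ i, (j i : ℕ)) *
        q ^ ((b : ℤ) * ∑ i : Fin r, (h - (i : ℕ)) * (j i : ℤ)))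
    (fun (j : Fin r → Fin a) l => ((q ^ b) ^ (∑ i, (j i : ℕ))) ^ l) T D]
  have hconst : (1 + q ^ b) ^ r * qnat q a ^ n * C
      = (1 + q ^ a) ^ r * (1 + q ^ b) ^ r / (1 - q) ^ n := by
    have h1 : q ^ a < 1 := pow_lt_one₀ hq0.le hq1 ha.ne'
    have h2 : (1 - q ^ a) ≠ 0 := by linarith
    have h3 : (1 - q) ≠ 0 := by linarith
    rw [hC, qnat, div_pow]
    field_simp
  rw [← mul_assoc, hconst]
  congr 1
  apply Finset.sum_congr rfl
  intro l _
  rw [jsum q hq0 r h l a b haodd]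
  have hrefl : (∏ k ∈ Finset.range r,
        (1 + q ^ ((a : ℤ) * ((b : ℤ) * (h - k + l)))) / (1 + q ^ ((b : ℤ) * (h - k + l))))
      = ∏ k ∈ Finset.range r,
          (1 + q ^ ((a : ℤ) * ((b : ℤ) * (h - r + l + 1 + k)))) /
            (1 + q ^ ((b : ℤ) * (h - r + l + 1 + k))) := by
    rw [← Finset.prod_range_reflect]
    apply Finset.prod_congr rfl
    intro k hk
    have hk' := Finset.mem_range.mp hk
    have hc : ((r - 1 - k : ℕ) : ℤ) = (r : ℤ) - 1 - k := by omega
    rw [hc, show h - ((r : ℤ) - 1 - k) + l = h - r + l + 1 + k by ring]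
  rw [hrefl, div_mul_eq_mul_div, mul_div_assoc]
  congr 1
  rw [hD, ← Finset.prod_div_distrib]
  exact Finset.prod_congr rfl fun k _ => by rw [div_div]

theorem qE_symmetry (q : ℝ) (hq0 : 0 < q) (hq1 : q < 1) (r : ℕ) (hr : 0 < r)
    (h : ℤ) (hhr : (r : ℤ) ≤ h) (n : ℕ) (x : ℝ)
    (a b : ℕ) (ha : 0 < a) (hb : 0 < b) (haodd : Odd a) (hbodd : Odd b) :
    (1 + q ^ b) ^ r * (qnat q a) ^ n *
        ∑ j : Fin r → Fin a,
          (-1 : ℝ) ^ (∑ l, (j l : ℕ)) *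
            q ^ ((b : ℤ) * ∑ l : Fin r, (h - (l : ℕ)) * (j l : ℤ)) *
            qE (q ^ a) h r n ((b : ℝ) * x + (b : ℝ) * (∑ l, (j l : ℕ) : ℕ) / a) =
      (1 + q ^ a) ^ r * (qnat q b) ^ n *
        ∑ j : Fin r → Fin b,
          (-1 : ℝ) ^ (∑ l, (j l : ℕ)) *
            q ^ ((a : ℤ) * ∑ l : Fin r, (h - (l : ℕ)) * (j l : ℤ)) *
            qE (q ^ b) h r n ((a : ℝ) * x + (a : ℝ) * (∑ l, (j l : ℕ) : ℕ) / b) := by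
  rw [key q hq0 hq1 r h n x a b ha haodd, key q hq0 hq1 r h n x b a hb hbodd]
  rw [mul_comm ((1 + q ^ b) ^ r) ((1 + q ^ a) ^ r), mul_comm ((b : ℝ)) ((a : ℝ))]
  congr 1
  apply Finset.sum_congr rfl
  intro l _
  congr 1
  apply Finset.prod_congr rfl
  intro k _
  rw [show (b : ℤ) * ((a : ℤ) * (h - r + l + 1 + k)) = (a : ℤ) * ((b : ℤ) * (h - r + l + 1 + k)) by ring,
    mul_comm (1 + q ^ ((a : ℤ) * (h - r + l + 1 + k))) (1 + q ^ ((b : ℤ) * (h - r + l + 1 + k)))]
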